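/- The Shamash differential built from the Taylor homotopies squares to zero over R: let R = Q/⟨a₁,…,a_c⟩ and let F_n be the free R-module with basis {ε_{(u,S)} : u ∈ ℕ^c, S ⊆ {1,…,r}, 2|u| + |S| = n}. Define φ : F_n → F_{n-1} by φ(ε_{(u,S)}) = Σ over the coordinates of the image in R of τ(ε_S) placed in index u, plus Σ_{i : u_i > 0} the image in R of σ_i(ε_S) placed in index u − e_i (that is, φ(ε_{(u,S)}) = Σ_{S'} τ_{S',S} ε_{(u,S')} + Σ_{i : u_i > 0} Σ_{S''} (σ_i)_{S'',S} ε_{(u−e_i,S'')}, where τ_{S',S} and (σ_i)_{S'',S} are the matrix entries of τ and σ_i reduced mod ⟨a₁,…,a_c⟩). Then φ ∘ φ = 0. -/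
import Mathlib


open MvPolynomial

/-- The position `p_{t,S}` of `t` in `S ∪ {t}`: one plus the number of elements of `S`
smaller than `t`. -/
def taylorPos {r : ℕ} (S : Finset (Fin r)) (t : Fin r) : ℕ :=
  (S.filter fun s => s < t).card + 1

variable (𝕜 : Type*) [Field 𝕜] {n r : ℕ}

/-- `m_S`: the lcm of the monomials `m_j = x^{v j}` for `j ∈ S` (equal to `1` when `S = ∅`). -/
noncomputable def taylorLcm (v : Fin r → (Fin n →₀ ℕ)) (S : Finset (Fin r)) :
    MvPolynomial (Fin n) 𝕜 :=
  monomial (S.sup v) 1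

/-- The matrix entry of the Taylor differential: `(-1)^{k-i} m_S / m_{S∖{s}}`
(where `i = p_{s,S}` is the position of `s` in `S` and `k = |S|`). -/
noncomputable def taylorEntry (v : Fin r → (Fin n →₀ ℕ)) (S : Finset (Fin r)) (s : Fin r) :
    MvPolynomial (Fin n) 𝕜 :=
  (-1) ^ (S.card - taylorPos S s) * monomial (S.sup v - (S.erase s).sup v) 1

/-- The matrix entry of the homotopy `σ`:
`(-1)^{k - p_{t,S} - 1} f_t m_t m_S / m_{S ∪ {t}}` (where `k = |S|`); the sign is written as
`(-1)^{k + p_{t,S} + 1}`, which agrees with `(-1)^{k - p_{t,S} - 1}` since the exponents have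
the same parity. -/
noncomputable def htpyEntry (v : Fin r → (Fin n →₀ ℕ)) (f : Fin r → MvPolynomial (Fin n) 𝕜)
    (S : Finset (Fin r)) (t : Fin r) : MvPolynomial (Fin n) 𝕜 :=
  (-1) ^ (S.card + taylorPos S t + 1) *
    (f t * monomial (v t + S.sup v - (insert t S).sup v) 1)

/-- The total module of the Taylor complex: the free `Q`-module with basis
`{ε_S : S ⊆ {1,…,r}}`; the basis element `ε_S` is `Finsupp.single S 1`. -/
abbrev TaylorModule (n r : ℕ) := Finset (Fin r) →₀ MvPolynomial (Fin n) 𝕜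

/-- The Taylor differential `τ` on the total module,
`τ(ε_S) = Σ_{s ∈ S} (-1)^{|S| - p_{s,S}} (m_S / m_{S∖{s}}) ε_{S∖{s}}`. -/
noncomputable def taylorTau (v : Fin r → (Fin n →₀ ℕ)) :
    TaylorModule 𝕜 n r →ₗ[MvPolynomial (Fin n) 𝕜] TaylorModule 𝕜 n r :=
  Finsupp.lsum (MvPolynomial (Fin n) 𝕜) fun S =>
    LinearMap.toSpanSingleton _ _
      (∑ s ∈ S, Finsupp.single (S.erase s) (taylorEntry 𝕜 v S s))

/-- The homotopy `σ` attached to a coefficient family `f` (with `a = Σ_j f_j m_j`):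
`σ(ε_S) = Σ_{t ∉ S} (-1)^{|S| - p_{t,S} - 1} (f_t m_t m_S / m_{S∪{t}}) ε_{S∪{t}}`. -/
noncomputable def taylorHtpy (v : Fin r → (Fin n →₀ ℕ)) (f : Fin r → MvPolynomial (Fin n) 𝕜) :
    TaylorModule 𝕜 n r →ₗ[MvPolynomial (Fin n) 𝕜] TaylorModule 𝕜 n r :=
  Finsupp.lsum (MvPolynomial (Fin n) 𝕜) fun S =>
    LinearMap.toSpanSingleton _ _
      (∑ t ∈ Sᶜ, Finsupp.single (insert t S) (htpyEntry 𝕜 v f S t))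

set_option synthInstance.maxHeartbeats 1000000
set_option maxHeartbeats 1000000

/-- The quotient ring `R = Q/⟨a₁,…,a_c⟩`. -/
abbrev CIRing (𝕜 : Type*) [Field 𝕜] (n c : ℕ) (a : Fin c → MvPolynomial (Fin n) 𝕜) :=
  MvPolynomial (Fin n) 𝕜 ⧸ Ideal.span (Set.range a)

/-- The total module of the Shamash construction over `R = Q/⟨a₁,…,a_c⟩`: the free
`R`-module with basis `{ε_{(u,S)} : u ∈ ℕ^c, S ⊆ {1,…,r}}` (the degree-`n` piece `F_n` is
spanned by the `ε_{(u,S)}` with `2|u| + |S| = n`). -/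
abbrev ShamashModule (𝕜 : Type*) [Field 𝕜] (n r c : ℕ)
    (a : Fin c → MvPolynomial (Fin n) 𝕜) :=
  ((Fin c →₀ ℕ) × Finset (Fin r)) →₀ CIRing 𝕜 n c a

/-- The Shamash differential `φ` built from the Taylor homotopies:
`φ(ε_{(u,S)}) = Σ_{S'} τ_{S',S} ε_{(u,S')} + Σ_{i : u_i > 0} Σ_{S''} (σ_i)_{S'',S} ε_{(u−e_i,S'')}`,
where the matrix entries of `τ` and `σ_i` are reduced mod `⟨a₁,…,a_c⟩`. -/
noncomputable def shamashPhi {𝕜 : Type*} [Field 𝕜] {n r c : ℕ}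
    (v : Fin r → (Fin n →₀ ℕ)) (a : Fin c → MvPolynomial (Fin n) 𝕜)
    (f : Fin c → Fin r → MvPolynomial (Fin n) 𝕜) :
    ShamashModule 𝕜 n r c a →ₗ[CIRing 𝕜 n c a] ShamashModule 𝕜 n r c a :=
  Finsupp.lsum (CIRing 𝕜 n c a)
    fun p : (Fin c →₀ ℕ) × Finset (Fin r) =>
    LinearMap.toSpanSingleton (CIRing 𝕜 n c a) (ShamashModule 𝕜 n r c a)
      ((∑ s ∈ p.2,
          Finsupp.single (p.1, p.2.erase s)
            (algebraMap (MvPolynomial (Fin n) 𝕜) (CIRing 𝕜 n c a)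
              (taylorEntry 𝕜 v p.2 s))) +
        ∑ i ∈ Finset.univ.filter fun i => 0 < p.1 i, ∑ t ∈ p.2ᶜ,
          Finsupp.single (p.1 - Finsupp.single i 1, insert t p.2)
            (algebraMap (MvPolynomial (Fin n) 𝕜) (CIRing 𝕜 n c a)
              (htpyEntry 𝕜 v (f i) p.2 t)))


section Aux
open Finset

section helpers
lemma neg_one_pow_sub {A : Type*} [Ring A] {p q : ℕ} (h : q ≤ p) :
    (-1 : A) ^ (p - q) = (-1) ^ (p + q) := by
  have h2 : p + q = (p - q) + 2 * q := by omega
  rw [h2, pow_add, pow_mul, neg_one_sq, one_pow, mul_one]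

lemma neg_one_pow_parity' {A : Type*} [Ring A] {p q : ℕ} (h : p % 2 ≠ q % 2) :
    (-1 : A) ^ p = -(-1) ^ q := by
  rw [neg_one_pow_eq_pow_mod_two p, neg_one_pow_eq_pow_mod_two q]
  have hp := Nat.mod_two_eq_zero_or_one p
  have hq := Nat.mod_two_eq_zero_or_one q
  rcases hp with hp | hp <;> rcases hq with hq | hq <;> simp_all

lemma neg_one_pow_mul_combine {A : Type*} [CommRing A] {e1 e2 e3 e4 : ℕ} {x y z w : A}
    (hxy : x * y = z * w) (hp : (e1 + e2) % 2 ≠ (e3 + e4) % 2) :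
    ((-1 : A) ^ e1 * x) * ((-1) ^ e2 * y) = -(((-1) ^ e3 * z) * ((-1) ^ e4 * w)) := by
  have h := neg_one_pow_parity' (A := A) hp
  calc ((-1 : A) ^ e1 * x) * ((-1) ^ e2 * y) = (-1) ^ (e1 + e2) * (x * y) := by
        rw [pow_add]; ring
    _ = -(((-1) ^ e3 * z) * ((-1) ^ e4 * w)) := by rw [hxy, h, pow_add]; ring

lemma neg_one_pow_mul_eq {A : Type*} [CommRing A] {e1 e2 : ℕ} {x y w : A}
    (hxy : x * y = w) (hp : (e1 + e2) % 2 = 0) :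
    ((-1 : A) ^ e1 * x) * ((-1) ^ e2 * y) = w := by
  have h : (-1 : A) ^ (e1 + e2) = 1 := by
    rw [neg_one_pow_eq_pow_mod_two, hp, pow_zero]
  calc ((-1 : A) ^ e1 * x) * ((-1) ^ e2 * y) = (-1) ^ (e1 + e2) * (x * y) := by
        rw [pow_add]; ring
    _ = w := by rw [hxy, h, one_mul]

variable {r : ℕ} {S : Finset (Fin r)} {s t : Fin r}

lemma taylorPos_le (hs : s ∈ S) : taylorPos S s ≤ S.card := by
  unfold taylorPos
  have h : (S.filter fun x => x < s) ⊆ S.erase s := by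
    intro x hx
    simp only [mem_filter] at hx
    exact mem_erase.mpr ⟨ne_of_lt hx.2, hx.1⟩
  have h2 := card_le_card h
  rw [card_erase_of_mem hs] at h2
  have h3 := card_pos.mpr ⟨s, hs⟩
  omega

lemma taylorPos_pos : 1 ≤ taylorPos S t := Nat.le_add_left 1 _

lemma taylorPos_erase (hs : s ∈ S) (h : s ≠ t) :
    taylorPos (S.erase s) t = if s < t then taylorPos S t - 1 else taylorPos S t := by
  unfold taylorPos
  rw [Finset.filter_erase]
  by_cases hlt : s < t
  · have hmem : s ∈ S.filter fun x => x < t := mem_filter.mpr ⟨hs, hlt⟩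
    rw [card_erase_of_mem hmem, if_pos hlt]
    have h4 := card_pos.mpr ⟨s, hmem⟩
    omega
  · have hnm : s ∉ S.filter fun x => x < t := by
      intro hx; exact hlt (mem_filter.mp hx).2
    rw [erase_eq_of_notMem hnm, if_neg hlt]

lemma taylorPos_erase_self :
    taylorPos (S.erase s) s = taylorPos S s := by
  unfold taylorPos
  have hnm : s ∉ S.filter fun x => x < s := by
    intro hx; exact absurd (mem_filter.mp hx).2 (lt_irrefl s)
  rw [Finset.filter_erase, erase_eq_of_notMem hnm]

lemma taylorPos_lt_two (hs : s ∈ S) (hlt : s < t) : 2 ≤ taylorPos S t := by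
  unfold taylorPos
  have h1 : 0 < (S.filter fun x => x < t).card :=
    card_pos.mpr ⟨s, mem_filter.mpr ⟨hs, hlt⟩⟩
  omega

lemma taylorPos_insert (ht : t ∉ S) (h : t ≠ s) :
    taylorPos (insert t S) s = if t < s then taylorPos S s + 1 else taylorPos S s := by
  unfold taylorPos
  rw [Finset.filter_insert]
  by_cases hlt : t < s
  · have hnm : t ∉ S.filter fun x => x < s := by
      intro hx; exact ht (mem_filter.mp hx).1
    rw [if_pos hlt, if_pos hlt, card_insert_of_notMem hnm]
  · rw [if_neg hlt, if_neg hlt]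

lemma taylorPos_insert_self :
    taylorPos (insert t S) t = taylorPos S t := by
  unfold taylorPos
  rw [Finset.filter_insert, if_neg (lt_irrefl t)]
end helpers

variable {𝕜}
variable {v : Fin r → (Fin n →₀ ℕ)} {S : Finset (Fin r)} {s s' t t' : Fin r}

lemma taylorEntry_eq (hs : s ∈ S) :
    taylorEntry 𝕜 v S s
      = (-1) ^ (S.card + taylorPos S s) * monomial (S.sup v - (S.erase s).sup v) 1 := by
  unfold taylorEntry
  rw [neg_one_pow_sub (taylorPos_le hs)]

lemma mono_mul (d1 d2 : Fin n →₀ ℕ) :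
    (monomial d1 (1 : 𝕜)) * monomial d2 1 = monomial (d1 + d2) 1 := by
  rw [monomial_mul, one_mul]

/-- L1 : τ entries anticommute. -/
lemma tauTau (hs : s ∈ S) (hs' : s' ∈ S) (hne : s' ≠ s) :
    taylorEntry 𝕜 v S s * taylorEntry 𝕜 v (S.erase s) s'
      = -(taylorEntry 𝕜 v S s' * taylorEntry 𝕜 v (S.erase s') s) := by
  have hs'e : s' ∈ S.erase s := mem_erase.mpr ⟨hne, hs'⟩
  have hse : s ∈ S.erase s' := mem_erase.mpr ⟨fun h => hne h.symm, hs⟩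
  rw [taylorEntry_eq hs, taylorEntry_eq hs'e, taylorEntry_eq hs', taylorEntry_eq hse]
  apply neg_one_pow_mul_combine
  · -- monomial part
    have hes : (S.erase s).erase s' = (S.erase s').erase s := erase_right_comm
    have hA1 : S.sup v = v s ⊔ (S.erase s).sup v := by
      rw [← Finset.sup_insert, Finset.insert_erase hs]
    have hA2 : S.sup v = v s' ⊔ (S.erase s').sup v := by
      rw [← Finset.sup_insert, Finset.insert_erase hs']
    have hB1 : (S.erase s).sup v = v s' ⊔ ((S.erase s).erase s').sup v := by
      rw [← Finset.sup_insert, Finset.insert_erase hs'e]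
    have hB2 : (S.erase s').sup v = v s ⊔ ((S.erase s).erase s').sup v := by
      rw [hes, ← Finset.sup_insert, Finset.insert_erase hse]
    have hd : (S.sup v - (S.erase s).sup v) + ((S.erase s).sup v - ((S.erase s).erase s').sup v)
        = (S.sup v - (S.erase s').sup v) + ((S.erase s').sup v - ((S.erase s').erase s).sup v) := by
      rw [← hes]
      ext a
      have h1 : (S.sup v) a = (v s) a ⊔ ((S.erase s).sup v) a := by
        rw [hA1, Finsupp.sup_apply]
      have h2 : (S.sup v) a = (v s') a ⊔ ((S.erase s').sup v) a := by
        rw [hA2, Finsupp.sup_apply]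
      have h3 : ((S.erase s).sup v) a = (v s') a ⊔ (((S.erase s).erase s').sup v) a := by
        rw [hB1, Finsupp.sup_apply]
      have h4 : ((S.erase s').sup v) a = (v s) a ⊔ (((S.erase s).erase s').sup v) a := by
        rw [hB2, Finsupp.sup_apply]
      simp only [Finsupp.add_apply, Finsupp.tsub_apply]
      omega
    rw [monomial_mul, monomial_mul, one_mul, hd]
  · -- parity part
    have hc1 : (S.erase s).card = S.card - 1 := card_erase_of_mem hs
    have hc2 : (S.erase s').card = S.card - 1 := card_erase_of_mem hs'
    have hk : 1 ≤ S.card := card_pos.mpr ⟨s, hs⟩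
    have hp1 := taylorPos_le hs
    have hp2 := taylorPos_le hs'
    have hq1 := taylorPos_erase hs (fun h => hne h.symm)
    have hq2 := taylorPos_erase hs' hne
    rcases lt_or_gt_of_ne hne with hlt | hlt
    · rw [if_neg (asymm hlt)] at hq1
      rw [if_pos hlt] at hq2
      have := taylorPos_lt_two hs' hlt
      omega
    · rw [if_pos hlt] at hq1
      rw [if_neg (asymm hlt)] at hq2
      have := taylorPos_lt_two hs hlt
      omega

/-- L2 : σ entries anticommute. -/
lemma htpyHtpy (g g' : Fin r → MvPolynomial (Fin n) 𝕜)
    (ht : t ∉ S) (ht' : t' ∉ S) (hne : t' ≠ t) :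
    htpyEntry 𝕜 v g S t * htpyEntry 𝕜 v g' (insert t S) t'
      = -(htpyEntry 𝕜 v g' S t' * htpyEntry 𝕜 v g (insert t' S) t) := by
  unfold htpyEntry
  apply neg_one_pow_mul_combine
  · -- monomial part
    have hd : (v t + S.sup v - (insert t S).sup v)
          + (v t' + (insert t S).sup v - (insert t' (insert t S)).sup v)
        = (v t' + S.sup v - (insert t' S).sup v)
          + (v t + (insert t' S).sup v - (insert t (insert t' S)).sup v) := by
      ext a
      have h1 : ((insert t S).sup v) a = (v t) a ⊔ (S.sup v) a := by
        rw [Finset.sup_insert, Finsupp.sup_apply]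
      have h2 : ((insert t' S).sup v) a = (v t') a ⊔ (S.sup v) a := by
        rw [Finset.sup_insert, Finsupp.sup_apply]
      have h3 : ((insert t' (insert t S)).sup v) a = (v t') a ⊔ ((insert t S).sup v) a := by
        rw [Finset.sup_insert, Finsupp.sup_apply]
      have h4 : ((insert t (insert t' S)).sup v) a = (v t) a ⊔ ((insert t' S).sup v) a := by
        rw [Finset.sup_insert, Finsupp.sup_apply]
      simp only [Finsupp.add_apply, Finsupp.tsub_apply]
      omega
    calc (g t * monomial (v t + S.sup v - (insert t S).sup v) 1)
          * (g' t' * monomial (v t' + (insert t S).sup v - (insert t' (insert t S)).sup v) 1)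
        = (g t * g' t') * monomial ((v t + S.sup v - (insert t S).sup v)
            + (v t' + (insert t S).sup v - (insert t' (insert t S)).sup v)) 1 := by
          rw [← mono_mul]; ring
      _ = (g' t' * g t) * monomial ((v t' + S.sup v - (insert t' S).sup v)
            + (v t + (insert t' S).sup v - (insert t (insert t' S)).sup v)) 1 := by
          rw [hd]; ring
      _ = (g' t' * monomial (v t' + S.sup v - (insert t' S).sup v) 1)
          * (g t * monomial (v t + (insert t' S).sup v - (insert t (insert t' S)).sup v) 1) := by
          rw [← mono_mul]; ring
  · -- parity part
    have hc1 : (insert t S).card = S.card + 1 := card_insert_of_notMem ht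
    have hc2 : (insert t' S).card = S.card + 1 := card_insert_of_notMem ht'
    have hq1 := taylorPos_insert ht (fun h => hne h.symm)
    have hq2 := taylorPos_insert ht' hne
    rcases lt_or_gt_of_ne hne with hlt | hlt
    · rw [if_neg (asymm hlt)] at hq1
      rw [if_pos hlt] at hq2
      omega
    · rw [if_pos hlt] at hq1
      rw [if_neg (asymm hlt)] at hq2
      omega

/-- L3 : mixed off-diagonal terms anticommute. -/
lemma tauHtpy (g : Fin r → MvPolynomial (Fin n) 𝕜) (hs : s ∈ S) (ht : t ∉ S) :
    taylorEntry 𝕜 v S s * htpyEntry 𝕜 v g (S.erase s) t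
      = -(htpyEntry 𝕜 v g S t * taylorEntry 𝕜 v (insert t S) s) := by
  have hts : t ≠ s := fun h => ht (h ▸ hs)
  have hsi : s ∈ insert t S := mem_insert_of_mem hs
  rw [taylorEntry_eq hs, taylorEntry_eq hsi]
  unfold htpyEntry
  apply neg_one_pow_mul_combine
  · -- monomial part
    have hei : (insert t S).erase s = insert t (S.erase s) :=
      Finset.erase_insert_of_ne hts
    have hd : (S.sup v - (S.erase s).sup v)
          + (v t + (S.erase s).sup v - (insert t (S.erase s)).sup v)
        = (v t + S.sup v - (insert t S).sup v)
          + ((insert t S).sup v - ((insert t S).erase s).sup v) := by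
      rw [hei]
      ext a
      have hA : S.sup v = v s ⊔ (S.erase s).sup v := by
        rw [← Finset.sup_insert, Finset.insert_erase hs]
      have h1 : (S.sup v) a = (v s) a ⊔ ((S.erase s).sup v) a := by
        rw [hA, Finsupp.sup_apply]
      have h2 : ((insert t (S.erase s)).sup v) a = (v t) a ⊔ ((S.erase s).sup v) a := by
        rw [Finset.sup_insert, Finsupp.sup_apply]
      have h3 : ((insert t S).sup v) a = (v t) a ⊔ (S.sup v) a := by
        rw [Finset.sup_insert, Finsupp.sup_apply]
      simp only [Finsupp.add_apply, Finsupp.tsub_apply]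
      omega
    calc monomial (S.sup v - (S.erase s).sup v) (1 : 𝕜)
          * (g t * monomial (v t + (S.erase s).sup v - (insert t (S.erase s)).sup v) 1)
        = g t * monomial ((S.sup v - (S.erase s).sup v)
            + (v t + (S.erase s).sup v - (insert t (S.erase s)).sup v)) 1 := by
          rw [← mono_mul]; ring
      _ = g t * monomial ((v t + S.sup v - (insert t S).sup v)
            + ((insert t S).sup v - ((insert t S).erase s).sup v)) 1 := by rw [hd]
      _ = (g t * monomial (v t + S.sup v - (insert t S).sup v) 1)
          * monomial ((insert t S).sup v - ((insert t S).erase s).sup v) 1 := by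
          rw [← mono_mul]; ring
  · -- parity part
    have hc1 : (S.erase s).card = S.card - 1 := card_erase_of_mem hs
    have hc2 : (insert t S).card = S.card + 1 := card_insert_of_notMem ht
    have hk : 1 ≤ S.card := card_pos.mpr ⟨s, hs⟩
    have hp1 := taylorPos_le hs
    have hq1 := taylorPos_erase hs (fun h => hts h.symm)
    have hq2 := taylorPos_insert ht hts
    rcases lt_or_gt_of_ne hts with hlt | hlt
    · rw [if_neg (asymm hlt)] at hq1
      rw [if_pos hlt] at hq2
      omega
    · rw [if_pos hlt] at hq1
      rw [if_neg (asymm hlt)] at hq2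
      have := taylorPos_lt_two hs hlt
      omega

/-- L4 : diagonal τσ term. -/
lemma tauHtpy_diag (g : Fin r → MvPolynomial (Fin n) 𝕜) (hs : s ∈ S) :
    taylorEntry 𝕜 v S s * htpyEntry 𝕜 v g (S.erase s) s
      = g s * monomial (v s) 1 := by
  rw [taylorEntry_eq hs]
  unfold htpyEntry
  apply neg_one_pow_mul_eq
  · -- monomial part
    have hd : (S.sup v - (S.erase s).sup v)
          + (v s + (S.erase s).sup v - (insert s (S.erase s)).sup v) = v s := by
      rw [Finset.insert_erase hs]
      ext a
      have hA : S.sup v = v s ⊔ (S.erase s).sup v := by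
        rw [← Finset.sup_insert, Finset.insert_erase hs]
      have h1 : (S.sup v) a = (v s) a ⊔ ((S.erase s).sup v) a := by
        rw [hA, Finsupp.sup_apply]
      simp only [Finsupp.add_apply, Finsupp.tsub_apply]
      omega
    calc monomial (S.sup v - (S.erase s).sup v) (1 : 𝕜)
          * (g s * monomial (v s + (S.erase s).sup v - (insert s (S.erase s)).sup v) 1)
        = g s * monomial ((S.sup v - (S.erase s).sup v)
            + (v s + (S.erase s).sup v - (insert s (S.erase s)).sup v)) 1 := by
          rw [← mono_mul]; ring
      _ = g s * monomial (v s) 1 := by rw [hd]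
  · -- parity part
    have hc1 : (S.erase s).card = S.card - 1 := card_erase_of_mem hs
    have hk : 1 ≤ S.card := card_pos.mpr ⟨s, hs⟩
    have hq : taylorPos (S.erase s) s = taylorPos S s := taylorPos_erase_self
    omega

/-- L5 : diagonal στ term. -/
lemma htpyTau_diag (g : Fin r → MvPolynomial (Fin n) 𝕜) (ht : t ∉ S) :
    htpyEntry 𝕜 v g S t * taylorEntry 𝕜 v (insert t S) t
      = g t * monomial (v t) 1 := by
  rw [taylorEntry_eq (mem_insert_self t S)]
  unfold htpyEntry
  apply neg_one_pow_mul_eq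
  · -- monomial part
    have hd : (v t + S.sup v - (insert t S).sup v)
          + ((insert t S).sup v - ((insert t S).erase t).sup v) = v t := by
      rw [Finset.erase_insert ht]
      ext a
      have h1 : ((insert t S).sup v) a = (v t) a ⊔ (S.sup v) a := by
        rw [Finset.sup_insert, Finsupp.sup_apply]
      simp only [Finsupp.add_apply, Finsupp.tsub_apply]
      omega
    calc (g t * monomial (v t + S.sup v - (insert t S).sup v) (1 : 𝕜))
          * monomial ((insert t S).sup v - ((insert t S).erase t).sup v) 1
        = g t * monomial ((v t + S.sup v - (insert t S).sup v)
            + ((insert t S).sup v - ((insert t S).erase t).sup v)) 1 := by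
          rw [← mono_mul]; ring
      _ = g t * monomial (v t) 1 := by rw [hd]
  · -- parity part
    have hc : (insert t S).card = S.card + 1 := card_insert_of_notMem ht
    have hq : taylorPos (insert t S) t = taylorPos S t := taylorPos_insert_self
    omega


noncomputable def shamashW {𝕜 : Type*} [Field 𝕜] {n r c : ℕ}
    (v : Fin r → (Fin n →₀ ℕ)) (a : Fin c → MvPolynomial (Fin n) 𝕜)
    (f : Fin c → Fin r → MvPolynomial (Fin n) 𝕜) (u : Fin c →₀ ℕ) (S : Finset (Fin r)) :
    ShamashModule 𝕜 n r c a :=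
  (∑ s ∈ S, Finsupp.single (u, S.erase s)
      (algebraMap (MvPolynomial (Fin n) 𝕜) (CIRing 𝕜 n c a) (taylorEntry 𝕜 v S s))) +
  ∑ i ∈ Finset.univ.filter fun i => 0 < u i, ∑ t ∈ Sᶜ,
    Finsupp.single (u - Finsupp.single i 1, insert t S)
      (algebraMap (MvPolynomial (Fin n) 𝕜) (CIRing 𝕜 n c a) (htpyEntry 𝕜 v (f i) S t))

lemma shamashPhi_single {𝕜 : Type*} [Field 𝕜] {n r c : ℕ}
    (v : Fin r → (Fin n →₀ ℕ)) (a : Fin c → MvPolynomial (Fin n) 𝕜)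
    (f : Fin c → Fin r → MvPolynomial (Fin n) 𝕜) (u : Fin c →₀ ℕ) (S : Finset (Fin r))
    (x : CIRing 𝕜 n c a) :
    shamashPhi v a f (Finsupp.single (u, S) x) = x • shamashW v a f u S := by
  simp only [shamashPhi, Finsupp.lsum_single, LinearMap.toSpanSingleton_apply, shamashW]

lemma shamashPhi_W {𝕜 : Type*} [Field 𝕜] {n r c : ℕ}
    (v : Fin r → (Fin n →₀ ℕ)) (a : Fin c → MvPolynomial (Fin n) 𝕜)
    (f : Fin c → Fin r → MvPolynomial (Fin n) 𝕜)
    (ha : ∀ i, a i = ∑ j : Fin r, f i j * monomial (v j) 1)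
    (u : Fin c →₀ ℕ) (S : Finset (Fin r)) :
    shamashPhi v a f (shamashW v a f u S) = 0 := by
  rw [shamashW, map_add, map_sum]
  simp only [map_sum, shamashPhi_single]
  simp only [shamashW, smul_add, Finset.smul_sum, Finsupp.smul_single, smul_eq_mul, ← map_mul]
  simp only [Finset.sum_add_distrib]
  have hT1 : (∑ s ∈ S, ∑ s' ∈ S.erase s,
      (Finsupp.single (u, (S.erase s).erase s')
        (algebraMap (MvPolynomial (Fin n) 𝕜) (CIRing 𝕜 n c a)
          (taylorEntry 𝕜 v S s * taylorEntry 𝕜 v (S.erase s) s')) :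
        ShamashModule 𝕜 n r c a)) = 0 := by
    rw [Finset.sum_sigma']
    apply Finset.sum_involution (fun x _ => (⟨x.2, x.1⟩ : (_ : Fin r) × Fin r))
    · intro x hx
      rw [Finset.mem_sigma, Finset.mem_erase] at hx
      obtain ⟨h1, h2, h3⟩ := hx
      dsimp only
      rw [tauTau h1 h3 h2, map_neg, Finsupp.single_neg, Finset.erase_right_comm,
        neg_add_cancel]
    · intro x hx _
      rw [Finset.mem_sigma, Finset.mem_erase] at hx
      intro heq
      exact hx.2.1 (congrArg Sigma.fst heq)
    · intro x hx
      rw [Finset.mem_sigma, Finset.mem_erase] at hx ⊢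
      exact ⟨hx.2.2, fun hh => hx.2.1 hh.symm, hx.1⟩
    · intro x hx
      rfl
  have hT4 : (∑ i ∈ Finset.univ.filter fun i => 0 < u i, ∑ t ∈ Sᶜ,
      ∑ j ∈ Finset.univ.filter fun j => 0 < (u - Finsupp.single i 1 : Fin c →₀ ℕ) j, ∑ t' ∈ (insert t S)ᶜ,
      (Finsupp.single ((u - Finsupp.single i 1) - Finsupp.single j 1, insert t' (insert t S))
        (algebraMap (MvPolynomial (Fin n) 𝕜) (CIRing 𝕜 n c a)
          (htpyEntry 𝕜 v (f i) S t * htpyEntry 𝕜 v (f j) (insert t S) t')) :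
        ShamashModule 𝕜 n r c a)) = 0 := by
    rw [Finset.sum_sigma', Finset.sum_sigma', Finset.sum_sigma']
    apply Finset.sum_involution (fun x _ => (⟨⟨⟨x.1.2, x.2⟩, x.1.1.1⟩, x.1.1.2⟩ :
      (_ : (_ : (_ : Fin c) × Fin r) × Fin c) × Fin r))
    · intro x hx
      simp only [Finset.mem_sigma, Finset.mem_filter, Finset.mem_compl] at hx
      obtain ⟨⟨⟨⟨-, hi⟩, ht⟩, -, hj⟩, ht'⟩ := hx
      have ht'S : x.2 ∉ S := fun h => ht' (Finset.mem_insert_of_mem h)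
      have hne : x.2 ≠ x.1.1.2 := fun h => ht' (Finset.mem_insert.mpr (Or.inl h))
      dsimp only
      rw [htpyHtpy (f x.1.1.1) (f x.1.2) ht ht'S hne, map_neg, Finsupp.single_neg,
        tsub_right_comm, Finset.insert_comm, neg_add_cancel]
    · intro x hx _
      simp only [Finset.mem_sigma, Finset.mem_filter, Finset.mem_compl] at hx
      intro heq
      have h2 : x.2 = x.1.1.2 := congrArg (fun z => z.1.1.2) heq
      exact hx.2 (Finset.mem_insert.mpr (Or.inl h2))
    · intro x hx
      simp only [Finset.mem_sigma, Finset.mem_filter, Finset.mem_compl] at hx ⊢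
      obtain ⟨⟨⟨⟨-, hi⟩, ht⟩, -, hj⟩, ht'⟩ := hx
      have ht'S : x.2 ∉ S := fun h => ht' (Finset.mem_insert_of_mem h)
      have hne : x.2 ≠ x.1.1.2 := fun h => ht' (Finset.mem_insert.mpr (Or.inl h))
      rw [Finsupp.tsub_apply] at hj
      have hj' : 0 < u x.1.2 := by omega
      have hi' : 0 < (u - Finsupp.single x.1.2 1 : Fin c →₀ ℕ) x.1.1.1 := by
        rw [Finsupp.tsub_apply]
        rw [Finsupp.single_apply] at hj ⊢
        rcases eq_or_ne x.1.1.1 x.1.2 with h | h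
        · rw [h] at hj ⊢
          rw [if_pos rfl] at hj ⊢
          omega
        · rw [if_neg (fun hh => h hh.symm)]
          omega
      refine ⟨⟨⟨⟨Finset.mem_univ _, hj'⟩, ht'S⟩, Finset.mem_univ _, hi'⟩, ?_⟩
      intro hmem
      rcases Finset.mem_insert.mp hmem with h | h
      · exact hne h.symm
      · exact ht h
    · intro x hx
      rfl
  have hT2 : (∑ s ∈ S, ∑ i ∈ Finset.univ.filter fun i => 0 < u i, ∑ t ∈ (S.erase s)ᶜ,
      (Finsupp.single (u - Finsupp.single i 1, insert t (S.erase s))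
        (algebraMap (MvPolynomial (Fin n) 𝕜) (CIRing 𝕜 n c a)
          (taylorEntry 𝕜 v S s * htpyEntry 𝕜 v (f i) (S.erase s) t)) :
        ShamashModule 𝕜 n r c a))
      = (∑ s ∈ S, ∑ i ∈ Finset.univ.filter fun i => 0 < u i,
          Finsupp.single (u - Finsupp.single i 1, S)
            (algebraMap (MvPolynomial (Fin n) 𝕜) (CIRing 𝕜 n c a)
              (taylorEntry 𝕜 v S s * htpyEntry 𝕜 v (f i) (S.erase s) s)))
        + ∑ s ∈ S, ∑ i ∈ Finset.univ.filter fun i => 0 < u i, ∑ t ∈ Sᶜ,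
            Finsupp.single (u - Finsupp.single i 1, insert t (S.erase s))
              (algebraMap (MvPolynomial (Fin n) 𝕜) (CIRing 𝕜 n c a)
                (taylorEntry 𝕜 v S s * htpyEntry 𝕜 v (f i) (S.erase s) t)) := by
    rw [← Finset.sum_add_distrib]
    refine Finset.sum_congr rfl fun s hs => ?_
    rw [← Finset.sum_add_distrib]
    refine Finset.sum_congr rfl fun i _ => ?_
    rw [Finset.compl_erase, Finset.sum_insert (by simp [hs]), Finset.insert_erase hs]
  have hT3 : (∑ i ∈ Finset.univ.filter fun i => 0 < u i, ∑ t ∈ Sᶜ, ∑ s ∈ insert t S,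
      (Finsupp.single (u - Finsupp.single i 1, (insert t S).erase s)
        (algebraMap (MvPolynomial (Fin n) 𝕜) (CIRing 𝕜 n c a)
          (htpyEntry 𝕜 v (f i) S t * taylorEntry 𝕜 v (insert t S) s)) :
        ShamashModule 𝕜 n r c a))
      = (∑ i ∈ Finset.univ.filter fun i => 0 < u i, ∑ t ∈ Sᶜ,
          Finsupp.single (u - Finsupp.single i 1, S)
            (algebraMap (MvPolynomial (Fin n) 𝕜) (CIRing 𝕜 n c a)
              (htpyEntry 𝕜 v (f i) S t * taylorEntry 𝕜 v (insert t S) t)))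
        + ∑ i ∈ Finset.univ.filter fun i => 0 < u i, ∑ t ∈ Sᶜ, ∑ s ∈ S,
            Finsupp.single (u - Finsupp.single i 1, (insert t S).erase s)
              (algebraMap (MvPolynomial (Fin n) 𝕜) (CIRing 𝕜 n c a)
                (htpyEntry 𝕜 v (f i) S t * taylorEntry 𝕜 v (insert t S) s)) := by
    rw [← Finset.sum_add_distrib]
    refine Finset.sum_congr rfl fun i _ => ?_
    rw [← Finset.sum_add_distrib]
    refine Finset.sum_congr rfl fun t ht => ?_
    rw [Finset.sum_insert (Finset.mem_compl.mp ht), Finset.erase_insert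
      (Finset.mem_compl.mp ht)]
  rw [hT1, hT2, hT3, hT4, zero_add, add_zero, add_add_add_comm]
  have hD : (∑ s ∈ S, ∑ i ∈ Finset.univ.filter fun i => 0 < u i,
      (Finsupp.single (u - Finsupp.single i 1, S)
        (algebraMap (MvPolynomial (Fin n) 𝕜) (CIRing 𝕜 n c a)
          (taylorEntry 𝕜 v S s * htpyEntry 𝕜 v (f i) (S.erase s) s)) :
        ShamashModule 𝕜 n r c a))
      + (∑ i ∈ Finset.univ.filter fun i => 0 < u i, ∑ t ∈ Sᶜ,
          Finsupp.single (u - Finsupp.single i 1, S)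
            (algebraMap (MvPolynomial (Fin n) 𝕜) (CIRing 𝕜 n c a)
              (htpyEntry 𝕜 v (f i) S t * taylorEntry 𝕜 v (insert t S) t))) = 0 := by
    have hD2 : (∑ s ∈ S, ∑ i ∈ Finset.univ.filter fun i => 0 < u i,
        (Finsupp.single (u - Finsupp.single i 1, S)
          (algebraMap (MvPolynomial (Fin n) 𝕜) (CIRing 𝕜 n c a)
            (taylorEntry 𝕜 v S s * htpyEntry 𝕜 v (f i) (S.erase s) s)) :
          ShamashModule 𝕜 n r c a))
        = ∑ i ∈ Finset.univ.filter fun i => 0 < u i, ∑ s ∈ S,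
            Finsupp.single (u - Finsupp.single i 1, S)
              (algebraMap (MvPolynomial (Fin n) 𝕜) (CIRing 𝕜 n c a)
                (f i s * monomial (v s) 1)) := by
      rw [Finset.sum_comm]
      exact Finset.sum_congr rfl fun i _ => Finset.sum_congr rfl fun s hs => by
        rw [tauHtpy_diag (f i) hs]
    have hD3 : (∑ i ∈ Finset.univ.filter fun i => 0 < u i, ∑ t ∈ Sᶜ,
        (Finsupp.single (u - Finsupp.single i 1, S)
          (algebraMap (MvPolynomial (Fin n) 𝕜) (CIRing 𝕜 n c a)
            (htpyEntry 𝕜 v (f i) S t * taylorEntry 𝕜 v (insert t S) t)) :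
          ShamashModule 𝕜 n r c a))
        = ∑ i ∈ Finset.univ.filter fun i => 0 < u i, ∑ t ∈ Sᶜ,
            Finsupp.single (u - Finsupp.single i 1, S)
              (algebraMap (MvPolynomial (Fin n) 𝕜) (CIRing 𝕜 n c a)
                (f i t * monomial (v t) 1)) :=
      Finset.sum_congr rfl fun i _ => Finset.sum_congr rfl fun t ht => by
        rw [htpyTau_diag (f i) (Finset.mem_compl.mp ht)]
    rw [hD2, hD3, ← Finset.sum_add_distrib]
    apply Finset.sum_eq_zero
    intro i _
    rw [Finset.sum_add_sum_compl, ← Finsupp.single_finset_sum, ← map_sum, ← ha i]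
    have hz : algebraMap (MvPolynomial (Fin n) 𝕜) (CIRing 𝕜 n c a) (a i) = 0 := by
      rw [Ideal.Quotient.algebraMap_eq]
      exact Ideal.Quotient.eq_zero_iff_mem.mpr (Ideal.subset_span ⟨i, rfl⟩)
    rw [hz, Finsupp.single_zero]
  have hE : (∑ s ∈ S, ∑ i ∈ Finset.univ.filter fun i => 0 < u i, ∑ t ∈ Sᶜ,
      (Finsupp.single (u - Finsupp.single i 1, insert t (S.erase s))
        (algebraMap (MvPolynomial (Fin n) 𝕜) (CIRing 𝕜 n c a)
          (taylorEntry 𝕜 v S s * htpyEntry 𝕜 v (f i) (S.erase s) t)) :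
        ShamashModule 𝕜 n r c a))
      + (∑ i ∈ Finset.univ.filter fun i => 0 < u i, ∑ t ∈ Sᶜ, ∑ s ∈ S,
          Finsupp.single (u - Finsupp.single i 1, (insert t S).erase s)
            (algebraMap (MvPolynomial (Fin n) 𝕜) (CIRing 𝕜 n c a)
              (htpyEntry 𝕜 v (f i) S t * taylorEntry 𝕜 v (insert t S) s))) = 0 := by
    have hE2 : (∑ s ∈ S, ∑ i ∈ Finset.univ.filter fun i => 0 < u i, ∑ t ∈ Sᶜ,
        (Finsupp.single (u - Finsupp.single i 1, insert t (S.erase s))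
          (algebraMap (MvPolynomial (Fin n) 𝕜) (CIRing 𝕜 n c a)
            (taylorEntry 𝕜 v S s * htpyEntry 𝕜 v (f i) (S.erase s) t)) :
          ShamashModule 𝕜 n r c a))
        = ∑ i ∈ Finset.univ.filter fun i => 0 < u i, ∑ t ∈ Sᶜ, ∑ s ∈ S,
            Finsupp.single (u - Finsupp.single i 1, insert t (S.erase s))
              (algebraMap (MvPolynomial (Fin n) 𝕜) (CIRing 𝕜 n c a)
                (taylorEntry 𝕜 v S s * htpyEntry 𝕜 v (f i) (S.erase s) t)) := by
      rw [Finset.sum_comm]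
      exact Finset.sum_congr rfl fun i _ => Finset.sum_comm
    rw [hE2, ← Finset.sum_add_distrib]
    apply Finset.sum_eq_zero
    intro i _
    rw [← Finset.sum_add_distrib]
    apply Finset.sum_eq_zero
    intro t ht
    rw [← Finset.sum_add_distrib]
    apply Finset.sum_eq_zero
    intro s hs
    have ht' : t ∉ S := Finset.mem_compl.mp ht
    have hts : t ≠ s := fun h => ht' (h ▸ hs)
    rw [tauHtpy (f i) hs ht', map_neg, Finsupp.single_neg,
      ← Finset.erase_insert_of_ne hts, neg_add_cancel]
  rw [hD, hE, add_zero]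

end Aux

/-- The Shamash differential built from the Taylor homotopies squares to
zero over `R = Q/⟨a₁,…,a_c⟩`: `φ ∘ φ = 0`.
Here `m_j = x^{v j}` and `a_i = Σ_j f_{i,j} m_j`. -/
theorem shamash_phi_squared_zero {𝕜 : Type*} [Field 𝕜] {n r c : ℕ}
    (v : Fin r → (Fin n →₀ ℕ)) (a : Fin c → MvPolynomial (Fin n) 𝕜)
    (f : Fin c → Fin r → MvPolynomial (Fin n) 𝕜)
    (ha : ∀ i, a i = ∑ j : Fin r, f i j * monomial (v j) 1) :
    shamashPhi v a f ∘ₗ shamashPhi v a f = 0 := by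
  apply Finsupp.lhom_ext
  intro p b
  obtain ⟨u, S⟩ := p
  rw [LinearMap.comp_apply, LinearMap.zero_apply, shamashPhi_single, map_smul,
    shamashPhi_W v a f ha, smul_zero]
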